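/- Let X be a Polish space with bounded compatible complete metric d and let {x_i}, {y_i} be sequences in X such that the set V({x_i}) of weak* limit points of the empirical measures (1/n)Σ_{i=0}^{n-1} δ_{x_i} is non-empty. If lim_{n→∞} min_{σ∈S_n} (1/n) Σ_{i=0}^{n-1} d(x_i, y_{σ(i)}) = 0, then V({x_i}) = V({y_i}). -/

import Mathlib

open MeasureTheory Filter Topology
open scoped ENNReal NNReal

section Defs

variable {X : Type*} [MetricSpace X] [MeasurableSpace X] [BorelSpace X]

/-- Kantorovich–Rubinshtein (dual-Lipschitz) distance between two measures:
the supremum of `|∫ f dμ - ∫ f dν|` over bounded `f` with Lipschitz constant at most `1`. -/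
noncomputable def krDist (μ ν : Measure X) : ℝ :=
  sSup { r : ℝ | ∃ f : X → ℝ, LipschitzWith 1 f ∧ (∃ C, ∀ x, |f x| ≤ C) ∧
    r = |∫ x, f x ∂μ - ∫ x, f x ∂ν| }

/-- Empirical measure of the first `n` terms of a sequence (as a plain measure). -/
noncomputable def empMeas (x : ℕ → X) (n : ℕ) : Measure X :=
  (n : ℝ≥0∞)⁻¹ • ∑ i ∈ Finset.range n, Measure.dirac (x i)

/-- Average of the Dirac measures at the first `max n 1` points of a sequence, as a
probability measure.  For `n ≥ 1` this is the `n`-th empirical measure. -/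
noncomputable def avgDirac (x : ℕ → X) (n : ℕ) : ProbabilityMeasure X :=
  ⟨((max n 1 : ℕ) : ℝ≥0∞)⁻¹ • ∑ i ∈ Finset.range (max n 1), Measure.dirac (x i), by
    constructor
    have h : (∑ i ∈ Finset.range (max n 1), Measure.dirac (x i)) Set.univ
        = ((max n 1 : ℕ) : ℝ≥0∞) := by
      simp [Measure.finset_sum_apply]
    rw [Measure.smul_apply, h, smul_eq_mul]
    exact ENNReal.inv_mul_cancel (by simp) (by simp)⟩

/-- The set of weak* limit points of the empirical measures of a sequence. -/
def limitMeasures (x : ℕ → X) : Set (ProbabilityMeasure X) :=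
  { μ | ∃ φ : ℕ → ℕ, StrictMono φ ∧ Tendsto (fun k => avgDirac x (φ k)) atTop (𝓝 μ) }

/-- `x` is a generic point for `μ`: the empirical measures along the orbit of `x`
converge to `μ` in the weak* topology. -/
def genericFor (T : X → X) (x : X) (μ : ProbabilityMeasure X) : Prop :=
  Tendsto (fun n => avgDirac (fun i => T^[i] x) n) atTop (𝓝 μ)

/-- The invariant measure supported on the periodic orbit of `x` of period `p`. -/
noncomputable def periodicOrbitMeasure (T : X → X) (x : X) (p : ℕ) : ProbabilityMeasure X :=
  avgDirac (fun i => T^[i] x) p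

/-- The set of invariant measures supported on periodic orbits of points of `K`. -/
def perMeasures (T : X → X) (K : Set X) : Set (ProbabilityMeasure X) :=
  { μ | ∃ x ∈ K, ∃ p, 0 < p ∧ T^[p] x = x ∧ μ = periodicOrbitMeasure T x p }

/-- The mean orbital pseudo-metric `Ē`. -/
noncomputable def meanOrbitalDist (T : X → X) (x y : X) : ℝ :=
  limsup (fun n => ⨅ σ : Equiv.Perm (Fin n),
    (∑ i : Fin n, dist (T^[(i : ℕ)] x) (T^[((σ i : Fin n) : ℕ)] y)) / n) atTop

/-- `x` is an asymptotic average pseudo-orbit for `T`. -/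
def IsAAPO (T : X → X) (x : ℕ → X) : Prop :=
  Tendsto (fun n => (∑ i ∈ Finset.range n, dist (T (x i)) (x (i + 1))) / n) atTop (𝓝 0)

/-- The point `x` is `K`-closable. -/
def ClosableAt (T : X → X) (K : Set X) (x : X) : Prop :=
  ∀ ε > (0 : ℝ), ∀ N : ℕ, ∃ p q : ℕ, 0 < p ∧ N ≤ p ∧ p ≤ q ∧ (q : ℝ) ≤ (1 + ε) * p ∧
    ∃ y ∈ K, T^[q] y = y ∧ ∀ i < p, dist (T^[i] y) (T^[i] x) < ε

/-- The set `K ⊆ Per(T)` is linkable. -/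
def Linkable (T : X → X) (K : Set X) : Prop :=
  ∀ y₁ ∈ K, ∀ y₂ ∈ K, ∀ ε > (0 : ℝ), ∀ lam ∈ Set.Icc (0 : ℝ) 1,
    ∃ p₁ p₂ q₁ q₂ : ℕ, 0 < p₁ ∧ 0 < p₂ ∧ T^[p₁] y₁ = y₁ ∧ T^[p₂] y₂ = y₂ ∧
      ∃ z ∈ K, T^[q₂] z = z ∧
        lam - ε ≤ (p₁ : ℝ) / (p₁ + p₂) ∧ (p₁ : ℝ) / (p₁ + p₂) ≤ lam + ε ∧
        p₁ ≤ q₁ ∧ (q₁ : ℝ) ≤ (1 + ε) * p₁ ∧ (∀ i < p₁, dist (T^[i] z) (T^[i] y₁) < ε) ∧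
        p₂ ≤ q₂ - q₁ ∧ ((q₂ - q₁ : ℕ) : ℝ) ≤ (1 + ε) * p₂ ∧
        (∀ i < p₂, dist (T^[i + q₁] z) (T^[i] y₂) < ε)

/-- `(X,T)` has the asymptotic orbital average shadowing property. -/
def AOASP (T : X → X) : Prop :=
  ∀ x : ℕ → X, IsAAPO T x → ∃ z : X,
    Tendsto (fun n => ⨅ σ : Equiv.Perm (Fin n),
      (∑ i : Fin n, dist (x (i : ℕ)) (T^[((σ i : Fin n) : ℕ)] z)) / n) atTop (𝓝 0)

end Defs

section Aux
set_option linter.unusedSectionVars false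
variable {X : Type*} [MetricSpace X] [MeasurableSpace X] [BorelSpace X]

noncomputable def avgDirac' (x : ℕ → X) (n : ℕ) : Measure X :=
  ((max n 1 : ℕ) : ℝ≥0∞)⁻¹ • ∑ i ∈ Finset.range (max n 1), Measure.dirac (x i)

lemma integrable_dirac'' {g : X → ℝ} (hg : Continuous g) (a : X) :
    Integrable g (Measure.dirac a) := by
  refine ⟨hg.aestronglyMeasurable, ?_⟩
  simp [HasFiniteIntegral, lintegral_dirac]

lemma integral_avgDirac' (x : ℕ → X) (n : ℕ) {g : X → ℝ} (hg : Continuous g) :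
    ∫ z, g z ∂(avgDirac' x n) = (∑ i ∈ Finset.range (max n 1), g (x i)) / (max n 1 : ℕ) := by
  rw [avgDirac', integral_smul_measure,
    integral_finset_sum_measure (fun i _ => integrable_dirac'' hg (x i))]
  simp only [integral_dirac]
  rw [ENNReal.toReal_inv, ENNReal.toReal_natCast, smul_eq_mul, inv_mul_eq_div]

noncomputable def matchCost (x y : ℕ → X) (n : ℕ) : ℝ :=
  ⨅ σ : Equiv.Perm (Fin n), (∑ i : Fin n, dist (x (i : ℕ)) (y ((σ i : Fin n) : ℕ))) / n

lemma matchCost_nonneg (x y : ℕ → X) (n : ℕ) : 0 ≤ matchCost x y n :=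
  le_ciInf fun σ => div_nonneg (Finset.sum_nonneg fun _ _ => dist_nonneg) (Nat.cast_nonneg n)

lemma bddBelow_matchCost (x y : ℕ → X) (n : ℕ) :
    BddBelow (Set.range fun σ : Equiv.Perm (Fin n) =>
      (∑ i : Fin n, dist (x (i : ℕ)) (y ((σ i : Fin n) : ℕ))) / n) := by
  refine ⟨0, ?_⟩
  rintro r ⟨σ, rfl⟩
  exact div_nonneg (Finset.sum_nonneg fun _ _ => dist_nonneg) (Nat.cast_nonneg n)

lemma matchCost_symm (x y : ℕ → X) (n : ℕ) : matchCost x y n = matchCost y x n := by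
  have key : ∀ u v : ℕ → X, matchCost u v n ≤ matchCost v u n := by
    intro u v
    refine le_ciInf fun σ => ?_
    refine le_trans (ciInf_le (bddBelow_matchCost u v n) σ⁻¹) (le_of_eq ?_)
    congr 1
    have := Equiv.sum_comp σ (fun i : Fin n => dist (u (i : ℕ)) (v ((σ⁻¹ i : Fin n) : ℕ)))
    rw [← this]
    refine Finset.sum_congr rfl fun i _ => ?_
    simp [dist_comm]
  exact le_antisymm (key x y) (key y x)

lemma abs_integral_sub_le {L : ℝ≥0} {g : X → ℝ} (hL : LipschitzWith L g)
    (x y : ℕ → X) {n : ℕ} (hn : 1 ≤ n) :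
    |∫ z, g z ∂(avgDirac' x n) - ∫ z, g z ∂(avgDirac' y n)| ≤ L * matchCost x y n := by
  have hmax : max n 1 = n := max_eq_left hn
  have hn0 : (0:ℝ) < n := by exact_mod_cast hn
  rw [integral_avgDirac' _ _ hL.continuous, integral_avgDirac' _ _ hL.continuous, hmax]
  rw [matchCost, Real.mul_iInf_of_nonneg L.coe_nonneg]
  refine le_ciInf fun σ => ?_
  have hy : (∑ i ∈ Finset.range n, g (y i))
      = ∑ i : Fin n, g (y ((σ i : Fin n) : ℕ)) := by
    rw [Equiv.sum_comp σ (fun i : Fin n => g (y (i : ℕ)))]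
    exact (Fin.sum_univ_eq_sum_range (fun i => g (y i)) n).symm
  have hx : (∑ i ∈ Finset.range n, g (x i)) = ∑ i : Fin n, g (x (i : ℕ)) :=
    (Fin.sum_univ_eq_sum_range (fun i => g (x i)) n).symm
  rw [hx, hy, div_sub_div_same, ← Finset.sum_sub_distrib, mul_div_assoc']
  rw [abs_div, abs_of_pos hn0, div_le_div_iff_of_pos_right hn0]
  rw [Finset.mul_sum]
  refine le_trans (Finset.abs_sum_le_sum_abs _ _) (Finset.sum_le_sum fun i _ => ?_)
  have := hL.dist_le_mul (x (i : ℕ)) (y ((σ i : Fin n) : ℕ))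
  rwa [Real.dist_eq] at this

lemma tendsto_integral_sub (x y : ℕ → X) (h : Tendsto (matchCost x y) atTop (𝓝 0))
    {φ : ℕ → ℕ} (hφ : Tendsto φ atTop atTop) {L : ℝ≥0} {g : X → ℝ} (hL : LipschitzWith L g) :
    Tendsto (fun k => ∫ z, g z ∂(avgDirac' y (φ k)) - ∫ z, g z ∂(avgDirac' x (φ k)))
      atTop (𝓝 0) := by
  have hc : Tendsto (fun k => (L : ℝ) * matchCost x y (φ k)) atTop (𝓝 0) := by
    simpa using ((h.comp hφ).const_mul (L : ℝ))
  refine squeeze_zero_norm' ?_ hc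
  filter_upwards [hφ.eventually_ge_atTop 1] with k hk
  rw [Real.norm_eq_abs, abs_sub_comm]
  exact abs_integral_sub_le hL x y hk

lemma avgDirac_coe (x : ℕ → X) (n : ℕ) : (avgDirac x n : Measure X) = avgDirac' x n := rfl

/-- The sequence of cut-off functions approximating the indicator of an open set from below. -/
noncomputable def cutoff (s : Set X) (m : ℕ) : X → ℝ :=
  fun z => min 1 (((m : ℝ) + 1) * Metric.infDist z s)

lemma cutoff_lipschitz (s : Set X) (m : ℕ) :
    LipschitzWith ((m : ℝ≥0) + 1) (cutoff s m) := by
  have base : LipschitzWith ((m : ℝ≥0) + 1) (fun z => ((m : ℝ) + 1) * Metric.infDist z s) := by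
    refine LipschitzWith.of_dist_le_mul fun a b => ?_
    rw [Real.dist_eq, ← mul_sub, abs_mul, abs_of_nonneg (by positivity)]
    have hd := (Metric.lipschitz_infDist_pt s).dist_le_mul a b
    rw [Real.dist_eq, NNReal.coe_one, one_mul] at hd
    have : ((((m : ℝ≥0) + 1) : ℝ≥0) : ℝ) = (m : ℝ) + 1 := by push_cast; ring
    rw [this]
    exact mul_le_mul_of_nonneg_left hd (by positivity)
  exact base.const_min 1

lemma cutoff_nonneg (s : Set X) (m : ℕ) (z : X) : 0 ≤ cutoff s m z :=
  le_min zero_le_one (mul_nonneg (by positivity) Metric.infDist_nonneg)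

lemma cutoff_le_one (s : Set X) (m : ℕ) (z : X) : cutoff s m z ≤ 1 := min_le_left _ _

lemma cutoff_le_indicator {G : Set X} (m : ℕ) (z : X) :
    cutoff Gᶜ m z ≤ Set.indicator G (fun _ => (1:ℝ)) z := by
  by_cases hz : z ∈ G
  · rw [Set.indicator_of_mem hz]; exact cutoff_le_one _ _ _
  · rw [Set.indicator_of_notMem hz]
    have : Metric.infDist z Gᶜ = 0 := Metric.infDist_zero_of_mem hz
    simp [cutoff, this]

lemma cutoff_tendsto {G : Set X} (hG : IsOpen G) (hne : (Gᶜ : Set X).Nonempty) (z : X) :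
    Tendsto (fun m => cutoff Gᶜ m z) atTop (𝓝 (Set.indicator G (fun _ => (1:ℝ)) z)) := by
  by_cases hz : z ∈ G
  · rw [Set.indicator_of_mem hz]
    have hpos : 0 < Metric.infDist z Gᶜ :=
      ((hG.isClosed_compl.notMem_iff_infDist_pos hne).mp (by simpa using hz))
    have hev : ∀ᶠ m : ℕ in atTop, cutoff Gᶜ m z = 1 := by
      filter_upwards [eventually_ge_atTop ⌈(Metric.infDist z Gᶜ)⁻¹⌉₊] with m hm
      have h1 : (Metric.infDist z Gᶜ)⁻¹ ≤ (m : ℝ) := Nat.ceil_le.mp hm |>.trans (le_refl _)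
      have h2 : 1 ≤ ((m : ℝ) + 1) * Metric.infDist z Gᶜ := by
        have h3 := inv_mul_cancel₀ hpos.ne'
        nlinarith [hpos, h1]
      simpa [cutoff] using min_eq_left h2
    exact Tendsto.congr' (by filter_upwards [hev] with m hm; rw [hm]) tendsto_const_nhds
  · rw [Set.indicator_of_notMem hz]
    have : ∀ m : ℕ, cutoff Gᶜ m z = 0 := fun m => by
      have h0 : Metric.infDist z Gᶜ = 0 := Metric.infDist_zero_of_mem (Set.mem_compl hz)
      simp [cutoff, h0]
    simpa [this] using tendsto_const_nhds

noncomputable def cutoffBCF (s : Set X) (m : ℕ) : BoundedContinuousFunction X ℝ :=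
  BoundedContinuousFunction.ofNormedAddCommGroup (cutoff s m)
    (cutoff_lipschitz s m).continuous 1
    (fun z => by
      rw [Real.norm_eq_abs, abs_of_nonneg (cutoff_nonneg s m z)]
      exact cutoff_le_one s m z)

lemma key_tendsto (x y : ℕ → X) (h : Tendsto (matchCost x y) atTop (𝓝 0))
    {μ : ProbabilityMeasure X} {φ : ℕ → ℕ} (hφ : StrictMono φ)
    (hx : Tendsto (fun k => avgDirac x (φ k)) atTop (𝓝 μ)) :
    Tendsto (fun k => avgDirac y (φ k)) atTop (𝓝 μ) := by
  have hφ' : Tendsto φ atTop atTop := hφ.tendsto_atTop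
  -- convergence of integrals of Lipschitz bounded functions along the y-empirical measures
  have hInt : ∀ (L : ℝ≥0) (g : BoundedContinuousFunction X ℝ), LipschitzWith L g →
      Tendsto (fun k => ∫ z, g z ∂(avgDirac' y (φ k))) atTop
        (𝓝 (∫ z, g z ∂(μ : Measure X))) := by
    intro L g hLg
    have h1 : Tendsto (fun k => ∫ z, g z ∂(avgDirac' x (φ k))) atTop
        (𝓝 (∫ z, g z ∂(μ : Measure X))) := by
      have := ProbabilityMeasure.tendsto_iff_forall_integral_tendsto.mp hx g
      simpa [avgDirac_coe] using this
    have h2 := tendsto_integral_sub x y h hφ' hLg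
    have h3 := h1.add h2
    rw [add_zero] at h3
    refine h3.congr fun k => by ring
  refine tendsto_of_forall_isOpen_le_liminf fun G hG => ?_
  by_cases huniv : G = Set.univ
  · subst huniv
    simp [liminf_const]
  have hne : (Gᶜ : Set X).Nonempty := Set.nonempty_compl.mpr huniv
  set u : ℕ → ℝ≥0 := fun k => avgDirac y (φ k) G with hu
  -- u is bounded above by 1
  have hu_le : ∀ k, u k ≤ 1 := fun k => by
    have := ProbabilityMeasure.apply_le_one (avgDirac y (φ k)) G
    exact this
  -- real-valued inequality
  have hcoe : ∀ k, ((u k : ℝ≥0) : ℝ) = ((avgDirac' y (φ k)) G).toReal := fun k => rfl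
  have hreal : ((μ G : ℝ≥0) : ℝ) ≤ atTop.liminf (fun k => ((u k : ℝ≥0) : ℝ)) := by
    -- dominated convergence on the limit measure
    have hdom : Tendsto (fun m => ∫ z, cutoff Gᶜ m z ∂(μ : Measure X)) atTop
        (𝓝 (∫ z, Set.indicator G (fun _ => (1:ℝ)) z ∂(μ : Measure X))) := by
      refine tendsto_integral_of_dominated_convergence (fun _ => (1:ℝ))
        (fun m => ((cutoff_lipschitz Gᶜ m).continuous).aestronglyMeasurable)
        (integrable_const 1) (fun m => .of_forall fun z => ?_)
        (.of_forall fun z => cutoff_tendsto hG hne z)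
      rw [Real.norm_eq_abs, abs_of_nonneg (cutoff_nonneg _ m z)]
      exact cutoff_le_one _ m z
    have hind : ∫ z, Set.indicator G (fun _ => (1:ℝ)) z ∂(μ : Measure X)
        = ((μ : Measure X) G).toReal := by
      rw [integral_indicator_const (1:ℝ) hG.measurableSet]; simp; rfl
    have hμG : ((μ G : ℝ≥0) : ℝ) = ((μ : Measure X) G).toReal := rfl
    rw [hμG, ← hind]
    refine le_of_tendsto hdom (Eventually.of_forall fun m => ?_)
    -- for fixed m, ∫ cutoff ∂μ = lim_k ∫ cutoff ∂μᵏʸ ≤ liminf u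
    have h2 := hInt ((m : ℝ≥0) + 1) (cutoffBCF Gᶜ m) (cutoff_lipschitz Gᶜ m)
    have h2' : Tendsto (fun k => ∫ z, cutoff Gᶜ m z ∂(avgDirac' y (φ k))) atTop
        (𝓝 (∫ z, cutoff Gᶜ m z ∂(μ : Measure X))) := by
      simpa [cutoffBCF] using h2
    have h3 : ∀ k, ∫ z, cutoff Gᶜ m z ∂(avgDirac' y (φ k)) ≤ ((u k : ℝ≥0) : ℝ) := by
      intro k
      rw [hcoe]
      haveI : IsProbabilityMeasure (avgDirac' y (φ k)) := by
        rw [← avgDirac_coe]; exact (avgDirac y (φ k)).2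
      have hint1 : Integrable (cutoff Gᶜ m) (avgDirac' y (φ k)) :=
        (cutoffBCF Gᶜ m).integrable _
      have hint2 : Integrable (Set.indicator G (fun _ => (1:ℝ))) (avgDirac' y (φ k)) :=
        (integrable_const (1:ℝ)).indicator hG.measurableSet
      calc ∫ z, cutoff Gᶜ m z ∂(avgDirac' y (φ k))
          ≤ ∫ z, Set.indicator G (fun _ => (1:ℝ)) z ∂(avgDirac' y (φ k)) :=
            integral_mono hint1 hint2 (cutoff_le_indicator m)
        _ = ((avgDirac' y (φ k)) G).toReal := by
            rw [integral_indicator_const (1:ℝ) hG.measurableSet]; simp; rfl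
    calc ∫ z, cutoff Gᶜ m z ∂(μ : Measure X)
        = atTop.liminf (fun k => ∫ z, cutoff Gᶜ m z ∂(avgDirac' y (φ k))) := h2'.liminf_eq.symm
      _ ≤ atTop.liminf (fun k => ((u k : ℝ≥0) : ℝ)) := by
          refine liminf_le_liminf (.of_forall h3) ?_ ?_
          · exact h2'.isBoundedUnder_ge
          · exact (Filter.isBoundedUnder_of
              ⟨1, fun k => by exact_mod_cast hu_le k⟩).isCoboundedUnder_ge
  -- transfer back to ℝ≥0
  have aux : ((atTop.liminf u : ℝ≥0) : ℝ) = atTop.liminf (fun k => ((u k : ℝ≥0) : ℝ)) := by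
    refine Monotone.map_liminf_of_continuousAt (f := ((↑) : ℝ≥0 → ℝ)) (fun a b hab => hab) u
      NNReal.continuous_coe.continuousAt ?_ ?_
    · exact (Filter.isBoundedUnder_of ⟨1, fun k => hu_le k⟩).isCoboundedUnder_ge
    · exact Filter.isBoundedUnder_of ⟨0, fun k => by positivity⟩
  have := hreal
  rw [← aux] at this
  exact_mod_cast this

end Aux


theorem stmt14 {X : Type*} [MetricSpace X] [TopologicalSpace.SeparableSpace X]
    [CompleteSpace X] [MeasurableSpace X] [BorelSpace X]
    (hd : ∃ C, ∀ a b : X, dist a b ≤ C)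
    (x y : ℕ → X) (hne : (limitMeasures x).Nonempty)
    (h : Tendsto (fun n => ⨅ σ : Equiv.Perm (Fin n),
      (∑ i : Fin n, dist (x (i : ℕ)) (y ((σ i : Fin n) : ℕ))) / n) atTop (𝓝 0)) :
    limitMeasures x = limitMeasures y := by
  have h' : Tendsto (matchCost x y) atTop (𝓝 0) := h
  have hsym : Tendsto (matchCost y x) atTop (𝓝 0) :=
    h'.congr fun n => matchCost_symm x y n
  apply Set.Subset.antisymm
  · rintro μ ⟨φ, hφ, hlim⟩
    exact ⟨φ, hφ, key_tendsto x y h' hφ hlim⟩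
  · rintro μ ⟨φ, hφ, hlim⟩
    exact ⟨φ, hφ, key_tendsto y x hsym hφ hlim⟩
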